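/- The vector π = ∑_{C∈𝒞} π_C · e_C, where π_C = ∑_{σ : C = F_{σ(1)}∘⋯∘F_{σ(N)}} ∏_{p=1}^{N} w_{F_{σ(p)}} / (1 − ∑_{i<p} w_{F_{σ(i)}}) (the sum over all permutations σ of {1,…,N} whose iterated face product equals C), satisfies K π = π; that is, the sampling-without-replacement distribution π is a stationary distribution of the BHR random walk. -/

import Mathlib

open Finset
open scoped Classical

noncomputable section

def faceMul {ι : Type*} (σ τ : ι → SignType) : ι → SignType :=
  fun i => if σ i = 0 then τ i else σ i

variable {ℓ : ℕ} {ι : Type*} [Fintype ι]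

def IsFace (f : ι → ((Fin ℓ → ℝ) →ₗ[ℝ] ℝ)) (σ : ι → SignType) : Prop :=
  {x : Fin ℓ → ℝ | ∀ i, SignType.sign (f i x) = σ i}.Nonempty

def IsChamber (f : ι → ((Fin ℓ → ℝ) →ₗ[ℝ] ℝ)) (σ : ι → SignType) : Prop :=
  IsFace f σ ∧ ∀ i, σ i ≠ 0

variable (f : ι → ((Fin ℓ → ℝ) →ₗ[ℝ] ℝ))

def Faces := {σ : ι → SignType // IsFace f σ}

def Chambers := {σ : ι → SignType // IsChamber f σ}

instance : Fintype (Faces f) := Subtype.fintype _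
instance : Fintype (Chambers f) := Subtype.fintype _

variable (R : Type*) [CommRing R]

/-- The basis vector of the free module on chambers indexed by a sign vector:
`e σ = single σ 1` when `σ` is a chamber (and junk `0` otherwise). -/
def eC (σ : ι → SignType) : Chambers f →₀ R :=
  if h : IsChamber f σ then Finsupp.single ⟨σ, h⟩ 1 else 0

/-- The linear action of a face `σ` on the free module on chambers: `e C ↦ e (σ∘C)`. -/
def faceAct (σ : ι → SignType) : (Chambers f →₀ R) →ₗ[R] (Chambers f →₀ R) :=
  Finsupp.lsum R fun C => LinearMap.toSpanSingleton R _ (eC f R (faceMul σ C.1))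

/-- The BHR transition operator `K(e C) = ∑_F w_F • e (F∘C)`. -/
def transOp (w : Faces f → R) : (Chambers f →₀ R) →ₗ[R] (Chambers f →₀ R) :=
  Finsupp.lsum R fun C =>
    LinearMap.toSpanSingleton R _ (∑ F : Faces f, w F • eC f R (faceMul F.1 C.1))

/-- The field of rational functions in the weight indeterminates `w_F`. -/
abbrev RatW := FractionRing (MvPolynomial (Faces f) ℝ)

/-- The weights as indeterminates in the field of rational functions. -/
def wt : Faces f → RatW f :=
  fun F => algebraMap (MvPolynomial (Faces f) ℝ) (RatW f) (MvPolynomial.X F)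

/-- The condition that the iterated face product `F_{σ(1)} ∘ ⋯ ∘ F_{σ(N)}` equals `C`. -/
def prodCond {N : ℕ} (en : Fin N ≃ Faces f) (σ : Equiv.Perm (Fin N)) (C : ι → SignType) : Prop :=
  (List.ofFn fun p => (en (σ p)).1).foldr faceMul 0 = C


/-- The coordinate `π_C = ∑_σ ∏_{p=1}^N w_{F_{σ(p)}} / (1 − ∑_{i<p} w_{F_{σ(i)}})` of the
sampling-without-replacement distribution, the sum being over all permutations `σ` whose
iterated face product equals `C`. -/
def piCoord {N : ℕ} (en : Fin N ≃ Faces f) (w : Faces f → ℝ) (C : ι → SignType) : ℝ :=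
  ∑ σ ∈ univ.filter (fun σ : Equiv.Perm (Fin N) => prodCond f en σ C),
    ∏ p : Fin N, w (en (σ p)) / (1 - ∑ i ∈ Finset.Iio p, w (en (σ i)))


/-! ### Auxiliary lemmas for the proof -/

lemma faceMul_zero' {ι : Type*} (σ : ι → SignType) : faceMul σ 0 = σ := by
  funext i; simp only [faceMul, Pi.zero_apply]; split <;> simp_all

lemma faceMul_zero_left' {ι : Type*} (τ : ι → SignType) : faceMul 0 τ = τ := by
  funext i; simp [faceMul]

lemma faceMul_assoc {ι : Type*} (a b c : ι → SignType) :
    faceMul (faceMul a b) c = faceMul a (faceMul b c) := by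
  funext i; simp only [faceMul]; by_cases h : a i = 0 <;> simp [h]

lemma faceMul_lrb {ι : Type*} (a b c : ι → SignType) :
    faceMul a (faceMul b (faceMul a c)) = faceMul a (faceMul b c) := by
  funext i; simp only [faceMul]
  by_cases h : a i = 0 <;> by_cases h' : b i = 0 <;> simp [h, h']

lemma foldr_faceMul_eq {ι : Type*} (l : List (ι → SignType)) (z : ι → SignType) :
    l.foldr faceMul z = faceMul (l.foldr faceMul 0) z := by
  induction l with
  | nil => funext i; simp [faceMul]
  | cons a l ih => simp [List.foldr_cons, ih, faceMul_assoc]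

lemma foldr_faceMul_append {ι : Type*} (L M : List (ι → SignType)) :
    (L ++ M).foldr faceMul 0 = faceMul (L.foldr faceMul 0) (M.foldr faceMul 0) := by
  rw [List.foldr_append, foldr_faceMul_eq]

section geom
variable {ℓ : ℕ} {ι : Type*} [Fintype ι] (f : ι → ((Fin ℓ → ℝ) →ₗ[ℝ] ℝ))

lemma isFace_zero : IsFace f 0 := ⟨0, fun i => by simp⟩

lemma isFace_faceMul {σ τ : ι → SignType} (hσ : IsFace f σ) (hτ : IsFace f τ) :
    IsFace f (faceMul σ τ) := by
  obtain ⟨x, hx⟩ := hσ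
  obtain ⟨y, hy⟩ := hτ
  have key : ∀ i, ∀ᶠ ε in nhdsWithin (0:ℝ) (Set.Ioi 0),
      SignType.sign (f i (x + ε • y)) = faceMul σ τ i := by
    intro i
    have hfi : ∀ ε : ℝ, f i (x + ε • y) = f i x + ε * f i y := by
      intro ε; simp [map_add, map_smul, smul_eq_mul]
    rcases h : σ i with _ | _ | _
    · have hx0 : f i x = 0 := by
        have := hx i; rw [h] at this; exact sign_eq_zero_iff.mp this
      filter_upwards [self_mem_nhdsWithin] with ε hε
      have hε' : (0:ℝ) < ε := hε
      rw [hfi, hx0, zero_add, sign_mul, sign_pos hε', one_mul, hy i]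
      simp [faceMul, h]
    · have hx0 : f i x < 0 := by
        have := hx i; rw [h] at this
        exact sign_eq_neg_one_iff.mp this
      have htend : Filter.Tendsto (fun ε : ℝ => f i x + ε * f i y)
          (nhdsWithin (0:ℝ) (Set.Ioi 0)) (nhds (f i x)) := by
        have : Filter.Tendsto (fun ε : ℝ => f i x + ε * f i y) (nhds 0)
            (nhds (f i x + 0 * f i y)) := by
          exact (continuous_const.add (continuous_id.mul continuous_const)).tendsto 0
        simpa using this.mono_left nhdsWithin_le_nhds
      filter_upwards [htend.eventually (eventually_lt_nhds hx0)] with ε hε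
      rw [hfi, sign_neg hε]
      simp [faceMul, h]
    · have hx0 : 0 < f i x := by
        have := hx i; rw [h] at this
        exact sign_eq_one_iff.mp this
      have htend : Filter.Tendsto (fun ε : ℝ => f i x + ε * f i y)
          (nhdsWithin (0:ℝ) (Set.Ioi 0)) (nhds (f i x)) := by
        have : Filter.Tendsto (fun ε : ℝ => f i x + ε * f i y) (nhds 0)
            (nhds (f i x + 0 * f i y)) := by
          exact (continuous_const.add (continuous_id.mul continuous_const)).tendsto 0
        simpa using this.mono_left nhdsWithin_le_nhds
      filter_upwards [htend.eventually (eventually_gt_nhds hx0)] with ε hε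
      rw [hfi, sign_pos hε]
      simp [faceMul, h]
  have : ∀ᶠ ε in nhdsWithin (0:ℝ) (Set.Ioi 0),
      ∀ i, SignType.sign (f i (x + ε • y)) = faceMul σ τ i :=
    Filter.eventually_all.mpr key
  obtain ⟨ε, hε⟩ := this.exists
  exact ⟨x + ε • y, hε⟩

lemma isFace_foldr (l : List (ι → SignType)) (h : ∀ σ ∈ l, IsFace f σ) :
    IsFace f (l.foldr faceMul 0) := by
  induction l with
  | nil => exact isFace_zero f
  | cons a l ih =>
      exact isFace_faceMul f (h a (by simp)) (ih fun σ hσ => h σ (by simp [hσ]))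

lemma foldr_ne_zero (l : List (ι → SignType)) (i : ι) (h : ∃ σ ∈ l, σ i ≠ 0) :
    (l.foldr faceMul 0) i ≠ 0 := by
  induction l with
  | nil => simp at h
  | cons a l ih =>
      simp only [List.foldr_cons, faceMul]
      by_cases ha : a i = 0
      · simp only [ha, if_pos rfl]
        apply ih
        rcases h with ⟨σ, hσ, hσi⟩
        rcases List.mem_cons.mp hσ with rfl | hm
        · exact absurd ha hσi
        · exact ⟨σ, hm, hσi⟩
      · simpa [ha] using ha

end geom

section lists
variable {α : Type*} {n : ℕ}

lemma cycleRange_val (k p : Fin (n+1)) :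
    (Fin.cycleRange k p).val =
      if p.val < k.val then p.val + 1 else if p.val = k.val then 0 else p.val := by
  rcases lt_trichotomy p k with h | h | h
  · rw [Fin.coe_cycleRange_of_lt h, if_pos (Fin.lt_def.mp h)]
  · subst h; rw [Fin.cycleRange_self, if_neg (lt_irrefl _), if_pos rfl]; rfl
  · rw [Fin.cycleRange_of_gt h, if_neg (by exact not_lt.mpr (le_of_lt (Fin.lt_def.mp h))),
      if_neg (by exact fun hc => absurd (Fin.ext hc) (ne_of_gt h))]

lemma ofFn_split (h : Fin (n+1) → α) (k : Fin (n+1)) :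
    List.ofFn h = h 0 ::
      ((List.ofFn fun p : Fin k.val => h ⟨p.val+1, by omega⟩) ++
        (List.ofFn fun p : Fin (n - k.val) => h ⟨p.val + k.val + 1, by omega⟩)) := by
  apply List.ext_getElem
  · simp; omega
  · intro j hj hj'
    have hjn : j < n + 1 := by simpa using hj
    have hk := k.isLt
    rcases j with _ | m
    · rw [List.getElem_cons_zero, List.getElem_ofFn]
      congr 1
    · rw [List.getElem_cons_succ]
      by_cases hmk : m < k.val
      · rw [List.getElem_append_left (by simpa using hmk)]
        simp only [List.getElem_ofFn]
      · rw [List.getElem_append_right (by simpa using hmk)]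
        simp only [List.getElem_ofFn, List.length_ofFn]
        congr 1
        apply Fin.ext
        simp; omega

lemma ofFn_cycleRange_split (h : Fin (n+1) → α) (k : Fin (n+1)) :
    (List.ofFn fun p => h (Fin.cycleRange k p)) =
      ((List.ofFn fun p : Fin k.val => h ⟨p.val+1, by omega⟩) ++ [h 0]) ++
        (List.ofFn fun p : Fin (n - k.val) => h ⟨p.val + k.val + 1, by omega⟩) := by
  apply List.ext_getElem
  · simp; omega
  · intro j hj hj'
    have hjn : j < n + 1 := by simpa using hj
    have hk := k.isLt
    simp only [List.length_ofFn, List.length_append, List.length_singleton] at hj hj'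
    rw [List.getElem_ofFn]
    by_cases hjk : j < k.val
    · rw [List.getElem_append_left (by simp; omega),
        List.getElem_append_left (by simp; omega)]
      simp only [List.getElem_ofFn]
      congr 1
      apply Fin.ext
      refine (cycleRange_val k ⟨j, hjn⟩).trans ?_
      simp [hjk]
    · by_cases hje : j = k.val
      · rw [List.getElem_append_left (by simp; omega),
          List.getElem_append_right (by simp; omega)]
        simp only [List.length_ofFn, List.getElem_singleton]
        congr 1
        apply Fin.ext
        refine (cycleRange_val k ⟨j, hjn⟩).trans ?_
        simp [hje]
      · rw [List.getElem_append_right (by simp; omega)]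
        simp only [List.getElem_ofFn, List.length_append, List.length_ofFn,
          List.length_singleton]
        congr 1
        apply Fin.ext
        refine (cycleRange_val k ⟨j, hjn⟩).trans ?_
        simp only [Fin.val_mk]
        simp only [if_neg hjk, if_neg hje]
        omega

end lists

lemma lrb_fold {ι : Type*} {n : ℕ} (h : Fin (n+1) → (ι → SignType)) (k : Fin (n+1)) :
    faceMul (h 0) ((List.ofFn fun p => h (Fin.cycleRange k p)).foldr faceMul 0) =
      (List.ofFn h).foldr faceMul 0 := by
  rw [ofFn_cycleRange_split, ofFn_split h k]
  simp only [foldr_faceMul_append, List.foldr_cons, List.foldr_nil, faceMul_assoc,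
    faceMul_zero_left']
  exact faceMul_lrb _ _ _

def vperm (v : ℕ → ℝ) (k : ℕ) : ℕ → ℝ :=
  fun m => if m < k then v (m+1) else if m = k then v 0 else v m

lemma core_weight_identity (N : ℕ) (hN : 0 < N) (v : ℕ → ℝ)
    (hv : ∀ m, m < N → 0 < v m) (hs1 : ∑ m ∈ range N, v m = 1) :
    ∑ k ∈ range N, v 0 * ∏ m ∈ range N, vperm v k m / (1 - ∑ i ∈ range m, vperm v k i)
      = ∏ m ∈ range N, v m / (1 - ∑ i ∈ range m, v i) := by
  set s : ℕ → ℝ := fun m => ∑ i ∈ range m, v i with hs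
  set t : ℝ := v 0 with htdef
  have ht : 0 < t := hv 0 hN
  have hs_le : ∀ m, m ≤ N → s m ≤ 1 := by
    intro m hm
    have : s m ≤ s N := by
      apply Finset.sum_le_sum_of_subset_of_nonneg (Finset.range_subset_range.mpr hm)
      intro i hi _
      exact (hv i (Finset.mem_range.mp hi)).le
    simpa [hs, hs1] using this
  have hs_lt : ∀ m, m < N → s m < 1 := by
    intro m hm
    have h1 : s (m+1) = s m + v m := Finset.sum_range_succ v m
    have h2 : s (m+1) ≤ 1 := hs_le (m+1) hm
    have := hv m hm
    linarith
  have hsN : s N = 1 := hs1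
  -- prefix sums of the permuted sequence
  have prefix_le : ∀ k m : ℕ, m ≤ k → ∑ i ∈ range m, vperm v k i = s (m+1) - t := by
    intro k m hm
    have h1 : ∑ i ∈ range m, vperm v k i = ∑ i ∈ range m, v (i+1) := by
      apply Finset.sum_congr rfl
      intro i hi
      have : i < k := lt_of_lt_of_le (Finset.mem_range.mp hi) hm
      simp [vperm, this]
    rw [h1]
    have h2 : s (m+1) = ∑ i ∈ range m, v (i+1) + v 0 := Finset.sum_range_succ' v m
    rw [h2]; ring
  have prefix_gt : ∀ k m : ℕ, k < m → ∑ i ∈ range m, vperm v k i = s m := by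
    intro k m hm
    have hsplit : ∑ i ∈ range (k+1), vperm v k i + ∑ i ∈ Ico (k+1) m, vperm v k i
        = ∑ i ∈ range m, vperm v k i := Finset.sum_range_add_sum_Ico _ hm
    have h1 : ∑ i ∈ range (k+1), vperm v k i = s (k+1) := by
      rw [Finset.sum_range_succ, prefix_le k k le_rfl]
      simp [vperm, htdef]
    have h2 : ∑ i ∈ Ico (k+1) m, vperm v k i = ∑ i ∈ Ico (k+1) m, v i := by
      apply Finset.sum_congr rfl
      intro i hi
      have : k < i := (Finset.mem_Ico.mp hi).1
      rw [vperm, if_neg (by omega), if_neg (by omega)]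
    have h3 : s (k+1) + ∑ i ∈ Ico (k+1) m, v i = s m :=
      Finset.sum_range_add_sum_Ico _ hm
    rw [← hsplit, h1, h2, h3]
  -- the numerator product is invariant
  have prod_num : ∀ k, k < N → ∏ m ∈ range N, vperm v k m = ∏ m ∈ range N, v m := by
    intro k hk
    rw [← Finset.prod_range_mul_prod_Ico _ (by omega : k + 1 ≤ N),
        ← Finset.prod_range_mul_prod_Ico _ (by omega : k + 1 ≤ N)]
    congr 1
    · rw [Finset.prod_range_succ, Finset.prod_range_succ' v k]
      congr 1
      · apply Finset.prod_congr rfl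
        intro i hi
        have : i < k := Finset.mem_range.mp hi
        simp [vperm, this]
      · simp [vperm]
    · apply Finset.prod_congr rfl
      intro i hi
      have : k < i := (Finset.mem_Ico.mp hi).1
      rw [vperm, if_neg (by omega), if_neg (by omega)]
  set B : ℕ → ℝ := fun j => ∏ m ∈ range j, (1 - s (m+1)) with hB
  set Q : ℕ → ℝ := fun j => ∏ m ∈ range j, (1 - s (m+1) + t) with hQ
  set Rr : ℕ → ℝ := fun k => ∏ m ∈ Ico (k+1) N, (1 - s m) with hR
  have prod_den : ∀ k, k < N →
      ∏ m ∈ range N, (1 - ∑ i ∈ range m, vperm v k i) = Q (k+1) * Rr k := by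
    intro k hk
    rw [← Finset.prod_range_mul_prod_Ico _ (by omega : k + 1 ≤ N)]
    congr 1
    · apply Finset.prod_congr rfl
      intro m hm
      have hm' : m ≤ k := by have := Finset.mem_range.mp hm; omega
      rw [prefix_le k m hm']; ring
    · apply Finset.prod_congr rfl
      intro m hm
      have : k < m := (Finset.mem_Ico.mp hm).1
      rw [prefix_gt k m this]
  -- positivity / nonvanishing
  have hBpos : ∀ k, k < N → 0 < B k := by
    intro k hk
    apply Finset.prod_pos
    intro m hm
    have : m + 1 < N := by have := Finset.mem_range.mp hm; omega
    have := hs_lt (m+1) this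
    linarith
  have hQpos : ∀ k, k ≤ N → 0 < Q k := by
    intro k hk
    apply Finset.prod_pos
    intro m hm
    have : m + 1 ≤ N := by have := Finset.mem_range.mp hm; omega
    have := hs_le (m+1) this
    linarith
  have hRpos : ∀ k, k < N → 0 < Rr k := by
    intro k hk
    apply Finset.prod_pos
    intro m hm
    have : m < N := (Finset.mem_Ico.mp hm).2
    have := hs_lt m this
    linarith
  set A : ℕ → ℝ := fun j => ∏ m ∈ range j, ((1 - s (m+1)) / (1 - s (m+1) + t)) with hA
  have hAB : ∀ j, A j = B j / Q j := fun j => Finset.prod_div_distrib _ _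
  have hA0 : A 0 = 1 := by simp [hA]
  have hAN : A N = 0 := by
    rw [hA]
    apply Finset.prod_eq_zero (Finset.mem_range.mpr (by omega : N - 1 < N))
    rw [(by omega : N - 1 + 1 = N), hsN]
    simp
  -- the per-k identity
  have per_k : ∀ k, k < N →
      v 0 * ∏ m ∈ range N, vperm v k m / (1 - ∑ i ∈ range m, vperm v k i)
        = (A k - A (k+1)) * ∏ m ∈ range N, v m / (1 - ∑ i ∈ range m, v i) := by
    intro k hk
    have hD : ∏ m ∈ range N, (1 - s m) = B k * Rr k := by
      rw [← Finset.prod_range_mul_prod_Ico _ (by omega : k + 1 ≤ N)]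
      congr 1
      rw [Finset.prod_range_succ' (fun m => 1 - s m) k]
      simp [hB, hs]
    have e1 : ∏ m ∈ range N, vperm v k m / (1 - ∑ i ∈ range m, vperm v k i)
        = (∏ m ∈ range N, v m) / (Q (k+1) * Rr k) := by
      rw [Finset.prod_div_distrib, prod_num k hk, prod_den k hk]
    have e2 : ∏ m ∈ range N, v m / (1 - ∑ i ∈ range m, v i)
        = (∏ m ∈ range N, v m) / (B k * Rr k) := by
      rw [Finset.prod_div_distrib, ← hD]
    rw [e1, e2, hAB k, hAB (k+1)]
    have hQsucc : Q (k+1) = Q k * (1 - s (k+1) + t) := Finset.prod_range_succ _ k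
    have hBsucc : B (k+1) = B k * (1 - s (k+1)) := Finset.prod_range_succ _ k
    rw [hQsucc, hBsucc]
    have hb : B k ≠ 0 := (hBpos k hk).ne'
    have hq : Q k ≠ 0 := (hQpos k (by omega)).ne'
    have hr : Rr k ≠ 0 := (hRpos k hk).ne'
    have hd : (1 - s (k+1) + t) ≠ 0 := by
      have := hs_le (k+1) (by omega)
      intro hc; linarith [ht]
    field_simp
    ring
  calc ∑ k ∈ range N, v 0 * ∏ m ∈ range N, vperm v k m / (1 - ∑ i ∈ range m, vperm v k i)
      = ∑ k ∈ range N, (A k - A (k+1)) * ∏ m ∈ range N, v m / (1 - ∑ i ∈ range m, v i) := by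
        apply Finset.sum_congr rfl
        intro k hk
        exact per_k k (Finset.mem_range.mp hk)
    _ = (A 0 - A N) * ∏ m ∈ range N, v m / (1 - ∑ i ∈ range m, v i) := by
        rw [← Finset.sum_mul, Finset.sum_range_sub' A N]
    _ = ∏ m ∈ range N, v m / (1 - ∑ i ∈ range m, v i) := by
        rw [hA0, hAN]; ring


lemma sum_Iio_fin {M : Type*} [AddCommMonoid M] {n : ℕ} (gn : ℕ → M) (p : Fin n) :
    ∑ i ∈ Iio p, gn i.val = ∑ m ∈ range p.val, gn m := by
  rw [← Nat.Iio_eq_range, ← Fin.map_valEmbedding_Iio, Finset.sum_map]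
  rfl

lemma per_tau {n : ℕ} (w' : Fin (n+1) → ℝ) (hw : ∀ p, 0 < w' p)
    (hw1 : ∑ p, w' p = 1) (τ : Equiv.Perm (Fin (n+1))) :
    ∑ k : Fin (n+1), w' (τ 0) *
        ∏ p : Fin (n+1), w' ((τ * Fin.cycleRange k) p) /
          (1 - ∑ i ∈ Iio p, w' ((τ * Fin.cycleRange k) i))
      = ∏ p : Fin (n+1), w' (τ p) / (1 - ∑ i ∈ Iio p, w' (τ i)) := by
  set v : ℕ → ℝ := fun m => if h : m < n+1 then w' (τ ⟨m, h⟩) else 0 with hv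
  have hval : ∀ p : Fin (n+1), w' (τ p) = v p.val := by
    intro p; rw [hv]; simp
    exact fun h => absurd p.isLt (by omega)
  have hv0 : w' (τ 0) = v 0 := hval 0
  have hvc : ∀ (k p : Fin (n+1)), w' (τ (Fin.cycleRange k p)) = vperm v k.val p.val := by
    intro k p
    rw [hval (Fin.cycleRange k p)]
    show v ((Fin.cycleRange k p).val) = _
    rw [cycleRange_val, vperm]
    split_ifs <;> rfl
  have hvpos : ∀ m, m < n+1 → 0 < v m := by
    intro m hm; rw [hv]; simpa [hm] using hw (τ ⟨m, hm⟩)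
  have hvsum : ∑ m ∈ range (n+1), v m = 1 := by
    rw [← Fin.sum_univ_eq_sum_range]
    rw [show ∑ p : Fin (n+1), v ↑p = ∑ p : Fin (n+1), w' (τ p) from
      Finset.sum_congr rfl fun p _ => (hval p).symm]
    rw [Equiv.sum_comp τ w']
    exact hw1
  have rhs_eq : ∏ p : Fin (n+1), w' (τ p) / (1 - ∑ i ∈ Iio p, w' (τ i))
      = ∏ m ∈ range (n+1), v m / (1 - ∑ i ∈ range m, v i) := by
    rw [← Fin.prod_univ_eq_prod_range]
    apply Finset.prod_congr rfl
    intro p _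
    rw [hval p]
    congr 2
    rw [show ∑ i ∈ Iio p, w' (τ i) = ∑ i ∈ Iio p, v i.val from
      Finset.sum_congr rfl fun i _ => hval i]
    exact sum_Iio_fin v p
  have lhs_eq : ∀ k : Fin (n+1),
      w' (τ 0) * ∏ p : Fin (n+1), w' ((τ * Fin.cycleRange k) p) /
          (1 - ∑ i ∈ Iio p, w' ((τ * Fin.cycleRange k) i))
        = v 0 * ∏ m ∈ range (n+1), vperm v k.val m / (1 - ∑ i ∈ range m, vperm v k.val i) := by
    intro k
    rw [hv0]
    congr 1
    rw [← Fin.prod_univ_eq_prod_range]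
    apply Finset.prod_congr rfl
    intro p _
    have happ : ∀ q : Fin (n+1), w' ((τ * Fin.cycleRange k) q) = vperm v k.val q.val := by
      intro q; rw [Equiv.Perm.mul_apply]; exact hvc k q
    rw [happ p]
    congr 2
    rw [show ∑ i ∈ Iio p, w' ((τ * Fin.cycleRange k) i) = ∑ i ∈ Iio p, vperm v k.val i.val from
      Finset.sum_congr rfl fun i _ => happ i]
    exact sum_Iio_fin (vperm v k.val) p
  calc ∑ k : Fin (n+1), w' (τ 0) *
        ∏ p : Fin (n+1), w' ((τ * Fin.cycleRange k) p) /
          (1 - ∑ i ∈ Iio p, w' ((τ * Fin.cycleRange k) i))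
      = ∑ k : Fin (n+1), v 0 * ∏ m ∈ range (n+1),
          vperm v k.val m / (1 - ∑ i ∈ range m, vperm v k.val i) :=
        Finset.sum_congr rfl fun k _ => lhs_eq k
    _ = ∑ k ∈ range (n+1), v 0 * ∏ m ∈ range (n+1),
          vperm v k m / (1 - ∑ i ∈ range m, vperm v k i) := by
        rw [← Fin.sum_univ_eq_sum_range]
    _ = ∏ m ∈ range (n+1), v m / (1 - ∑ i ∈ range m, v i) :=
        core_weight_identity (n+1) (by omega) v hvpos hvsum
    _ = ∏ p : Fin (n+1), w' (τ p) / (1 - ∑ i ∈ Iio p, w' (τ i)) := rhs_eq.symm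



/-- The sampling-without-replacement distribution `π` is a stationary distribution of the
BHR random walk: `K π = π`. -/
theorem transOp_pi_eq_pi {ℓ : ℕ} (hℓ : 1 ≤ ℓ) {ι : Type*} [Fintype ι] [Nonempty ι]
    (f : ι → ((Fin ℓ → ℝ) →ₗ[ℝ] ℝ)) (hf : ∀ i, f i ≠ 0)
    (hess : (⨅ i, LinearMap.ker (f i)) = ⊥)
    (w : Faces f → ℝ) (hw : ∀ F, 0 < w F) (hw1 : ∑ F : Faces f, w F = 1)
    (N : ℕ) (en : Fin N ≃ Faces f) :
    transOp f ℝ w (∑ C : Chambers f, Finsupp.single C (piCoord f en w C.1)) =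
      ∑ C : Chambers f, Finsupp.single C (piCoord f en w C.1) := by
  classical
  cases N with
  | zero => exact (en.symm ⟨0, isFace_zero f⟩).elim0
  | succ n =>
    set W : Equiv.Perm (Fin (n+1)) → ℝ :=
      fun σ => ∏ p : Fin (n+1), w (en (σ p)) / (1 - ∑ i ∈ Finset.Iio p, w (en (σ i))) with hW
    have hprodface : ∀ σ : Equiv.Perm (Fin (n+1)),
        IsChamber f ((List.ofFn fun p => (en (σ p)).1).foldr faceMul 0) := by
      intro σ
      constructor
      · apply isFace_foldr
        intro τ' hτ'
        obtain ⟨p, hp⟩ := List.mem_ofFn.mp hτ'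
        exact hp ▸ (en (σ p)).2
      · intro i
        apply foldr_ne_zero
        obtain ⟨x, hx⟩ : ∃ x, f i x ≠ 0 := by
          by_contra hc
          push_neg at hc
          exact hf i (LinearMap.ext fun x => hc x)
        have hGf : IsFace f (fun j => SignType.sign (f j x)) := ⟨x, fun j => rfl⟩
        refine ⟨fun j => SignType.sign (f j x), ?_, ?_⟩
        · apply List.mem_ofFn.mpr
          refine ⟨σ⁻¹ (en.symm ⟨_, hGf⟩), ?_⟩
          show (en (σ (σ⁻¹ (en.symm ⟨_, hGf⟩)))).1 = _
          rw [(by exact Equiv.apply_symm_apply σ _ : σ (σ⁻¹ (en.symm ⟨_, hGf⟩)) = en.symm ⟨_, hGf⟩)]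
          exact congrArg Subtype.val (en.apply_symm_apply _)
        · simpa using hx
    set g : Equiv.Perm (Fin (n+1)) → Chambers f :=
      fun σ => ⟨_, hprodface σ⟩ with hg
    have heCg : ∀ σ : Equiv.Perm (Fin (n+1)),
        eC f ℝ ((List.ofFn fun p => (en (σ p)).1).foldr faceMul 0)
          = Finsupp.single (g σ) 1 := by
      intro σ
      rw [eC, dif_pos (hprodface σ)]
    have hX : ∑ C : Chambers f, Finsupp.single C (piCoord f en w C.1)
        = ∑ σ : Equiv.Perm (Fin (n+1)), Finsupp.single (g σ) (W σ) := by
      rw [← Finset.sum_fiberwise_of_maps_to (g := g)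
        (fun σ _ => Finset.mem_univ (g σ)) (fun σ => Finsupp.single (g σ) (W σ))]
      apply Finset.sum_congr rfl
      intro C _
      have hfil : (univ.filter fun σ : Equiv.Perm (Fin (n+1)) => prodCond f en σ C.1)
          = univ.filter fun σ => g σ = C := by
        apply Finset.filter_congr
        intro σ _
        simp only [prodCond, hg]
        exact ⟨fun h => Subtype.ext h, fun h => congrArg Subtype.val h⟩
      rw [piCoord, hfil, Finsupp.single_finset_sum]
      apply Finset.sum_congr rfl
      intro σ hσ
      rw [(Finset.mem_filter.mp hσ).2]
    rw [hX, map_sum]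
    have hTσ : ∀ σ : Equiv.Perm (Fin (n+1)),
        transOp f ℝ w (Finsupp.single (g σ) (W σ))
          = ∑ j : Fin (n+1), (W σ * w (en j)) •
              eC f ℝ (faceMul (en j).1 ((List.ofFn fun p => (en (σ p)).1).foldr faceMul 0)) := by
      intro σ
      rw [transOp, Finsupp.lsum_single, LinearMap.toSpanSingleton_apply]
      rw [← Equiv.sum_comp en (fun F => w F • eC f ℝ (faceMul F.1 (g σ).1))]
      rw [Finset.smul_sum]
      apply Finset.sum_congr rfl
      intro j _
      rw [smul_smul]
    rw [Finset.sum_congr rfl fun σ _ => hTσ σ]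
    rw [← Fintype.sum_prod_type']
    -- reindex by the bijection (τ, k) ↦ (τ * cycleRange k, τ 0)
    have hinv0 : ∀ k : Fin (n+1), (Fin.cycleRange k)⁻¹ 0 = k := by
      intro k
      rw [Equiv.Perm.inv_eq_iff_eq]
      exact (Fin.cycleRange_self k).symm
    set E : (Equiv.Perm (Fin (n+1)) × Fin (n+1)) ≃ (Equiv.Perm (Fin (n+1)) × Fin (n+1)) :=
      { toFun := fun x => (x.1 * Fin.cycleRange x.2, x.1 0)
        invFun := fun y => (y.1 * (Fin.cycleRange (y.1⁻¹ y.2))⁻¹, y.1⁻¹ y.2)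
        left_inv := by
          rintro ⟨τ, k⟩
          have h2 : (τ * Fin.cycleRange k)⁻¹ (τ 0) = k := by
            rw [mul_inv_rev, Equiv.Perm.mul_apply, (by exact Equiv.symm_apply_apply τ 0 : τ⁻¹ (τ 0) = 0), hinv0]
          simp only [h2]
          exact Prod.ext (mul_inv_cancel_right τ _) rfl
        right_inv := by
          rintro ⟨σ, j⟩
          have h1 : (σ * (Fin.cycleRange (σ⁻¹ j))⁻¹) 0 = j := by
            rw [Equiv.Perm.mul_apply, hinv0, (by exact Equiv.apply_symm_apply σ j : σ (σ⁻¹ j) = j)]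
          simp only [h1]
          exact Prod.ext (inv_mul_cancel_right σ _) rfl } with hE
    rw [← Fintype.sum_equiv E
      (fun x => (W (x.1 * Fin.cycleRange x.2) * w (en (x.1 0))) •
        eC f ℝ (faceMul (en (x.1 0)).1
          ((List.ofFn fun p => (en ((x.1 * Fin.cycleRange x.2) p)).1).foldr faceMul 0)))
      (fun x => (W x.1 * w (en x.2)) •
        eC f ℝ (faceMul (en x.2).1 ((List.ofFn fun p => (en (x.1 p)).1).foldr faceMul 0)))
      (fun x => rfl)]
    have hfold : ∀ (τ : Equiv.Perm (Fin (n+1))) (k : Fin (n+1)),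
        faceMul (en (τ 0)).1
            ((List.ofFn fun p => (en ((τ * Fin.cycleRange k) p)).1).foldr faceMul 0)
          = (List.ofFn fun p => (en (τ p)).1).foldr faceMul 0 := by
      intro τ k
      exact lrb_fold (fun p => (en (τ p)).1) k
    rw [Fintype.sum_prod_type]
    apply Finset.sum_congr rfl
    intro τ _
    dsimp only
    have hper : ∑ k : Fin (n+1), w (en (τ 0)) * W (τ * Fin.cycleRange k) = W τ :=
      per_tau (fun q => w (en q)) (fun q => hw (en q))
        (Equiv.sum_comp en w ▸ hw1) τ
    calc ∑ k : Fin (n+1), (W (τ * Fin.cycleRange k) * w (en (τ 0))) •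
            eC f ℝ (faceMul (en (τ 0)).1
              ((List.ofFn fun p => (en ((τ * Fin.cycleRange k) p)).1).foldr faceMul 0))
        = ∑ k : Fin (n+1), (w (en (τ 0)) * W (τ * Fin.cycleRange k)) •
            Finsupp.single (g τ) 1 := by
          apply Finset.sum_congr rfl
          intro k _
          rw [hfold τ k, heCg τ, mul_comm]
      _ = (∑ k : Fin (n+1), w (en (τ 0)) * W (τ * Fin.cycleRange k)) •
            Finsupp.single (g τ) (1:ℝ) := by
          rw [Finset.sum_smul]
      _ = Finsupp.single (g τ) (W τ) := by
          rw [hper, Finsupp.smul_single, smul_eq_mul, mul_one]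

end
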